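/- Monotone saturation of optimal transmit power: with all other powers fixed at their minimum values P_{-1}^min and g_1 the largest gain, the root P_1^† of ∂η/∂P_1 = 0 (where η(P_1) = log₂(1 + (P_1 g_1 + C)/σ²)/(P_f + P_1 + D) with C = Σ_{l>1} P_l^min g_l, D = Σ_{l>1} P_l^min) exists and is unique on (0,∞) whenever ∂η/∂P_1(0) > 0, η is strictly increasing on [0, P_1^†] and strictly decreasing on [P_1^†, ∞), and lim_{P_1→∞} η(P_1) = 0. -/

import Mathlib

theorem single_variable_ee_unimodal (g C D σ2 Pf : ℝ)
    (hg : 0 < g) (hC : 0 ≤ C) (hD : 0 ≤ D) (hσ : 0 < σ2) (hPf : 0 < Pf)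
    (η dη : ℝ → ℝ)
    (hη : η = fun t => Real.logb 2 (1 + (t * g + C) / σ2) / (Pf + t + D))
    (hdη : dη = fun t => g / (Real.log 2 * (σ2 + t * g + C) * (Pf + t + D))
      - Real.logb 2 (1 + (t * g + C) / σ2) / (Pf + t + D) ^ 2)
    (h0 : 0 < dη 0) :
    ∃ tstar : ℝ, 0 < tstar ∧ dη tstar = 0 ∧
      (∀ t : ℝ, 0 < t → dη t = 0 → t = tstar) ∧
      StrictMonoOn η (Set.Icc 0 tstar) ∧
      StrictAntiOn η (Set.Ici tstar) ∧
      Filter.Tendsto η Filter.atTop (nhds 0) := by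
  have hL : 0 < Real.log 2 := Real.log_pos one_lt_two
  have hA : ∀ t : ℝ, 0 ≤ t → 0 < σ2 + t * g + C := by
    intro t ht; nlinarith [mul_nonneg ht hg.le]
  have hB : ∀ t : ℝ, 0 ≤ t → 0 < Pf + t + D := by intro t ht; linarith
  have hw : ∀ t : ℝ, 0 ≤ t → 0 < 1 + (t * g + C) / σ2 := by
    intro t ht
    have : 0 ≤ (t * g + C) / σ2 := div_nonneg (by nlinarith [mul_nonneg ht hg.le]) hσ.le
    linarith
  -- derivative of the inner log
  have hlog : ∀ t : ℝ, 0 ≤ t →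
      HasDerivAt (fun s : ℝ => Real.log (1 + (s * g + C) / σ2)) (g / (σ2 + t * g + C)) t := by
    intro t ht
    have hw' : HasDerivAt (fun s : ℝ => 1 + (s * g + C) / σ2) (g / σ2) t := by
      have h1 : HasDerivAt (fun s : ℝ => s * g + C) g t := by
        simpa using ((hasDerivAt_id t).mul_const g).add_const C
      simpa using (h1.div_const σ2).const_add 1
    have := (Real.hasDerivAt_log (ne_of_gt (hw t ht))).comp t hw'
    refine this.congr_deriv ?_
    symm
    have h2 : (1 + (t * g + C) / σ2) = (σ2 + t * g + C) / σ2 := by field_simp; ring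
    rw [h2]
    field_simp
  have hBd : ∀ t : ℝ, HasDerivAt (fun s : ℝ => Pf + s + D) 1 t := by
    intro t
    simpa using (((hasDerivAt_id t).const_add Pf).add_const D)
  -- derivative of η
  have hηd : ∀ t : ℝ, 0 ≤ t → HasDerivAt η (dη t) t := by
    intro t ht
    have hηe : η = fun s : ℝ => Real.log (1 + (s * g + C) / σ2) / Real.log 2 / (Pf + s + D) := by
      rw [hη]; funext s; simp [Real.logb]
    rw [hηe]
    have := ((hlog t ht).div_const (Real.log 2)).div (hBd t) (ne_of_gt (hB t ht))
    refine this.congr_deriv ?_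
    symm
    rw [hdη]
    simp only [Real.logb]
    have hA' := (hA t ht).ne'
    have hB' := (hB t ht).ne'
    field_simp
  set φ : ℝ → ℝ := fun t => g * (Pf + t + D) / (Real.log 2 * (σ2 + t * g + C))
      - Real.logb 2 (1 + (t * g + C) / σ2) with hφdef
  have hφdη : ∀ t : ℝ, 0 ≤ t → dη t = φ t / (Pf + t + D) ^ 2 := by
    intro t ht
    rw [hdη, hφdef]
    simp only [Real.logb]
    have hA' := (hA t ht).ne'
    have hB' := (hB t ht).ne'
    field_simp
  -- derivative of φ
  have hφd : ∀ t : ℝ, 0 ≤ t →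
      HasDerivAt φ (-(g ^ 2 * (Pf + t + D)) / (Real.log 2 * (σ2 + t * g + C) ^ 2)) t := by
    intro t ht
    have hφe : φ = fun s : ℝ => g * (Pf + s + D) / (Real.log 2 * (σ2 + s * g + C))
        - Real.log (1 + (s * g + C) / σ2) / Real.log 2 := by
      funext s; rw [hφdef]; simp [Real.logb]
    rw [hφe]
    have hnum : HasDerivAt (fun s : ℝ => g * (Pf + s + D)) g t := by
      simpa using (hBd t).const_mul g
    have hden : HasDerivAt (fun s : ℝ => Real.log 2 * (σ2 + s * g + C)) (Real.log 2 * g) t := by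
      have h1 : HasDerivAt (fun s : ℝ => σ2 + s * g + C) g t := by
        simpa using (((hasDerivAt_id t).mul_const g).const_add σ2).add_const C
      simpa using h1.const_mul (Real.log 2)
    have hdenne : Real.log 2 * (σ2 + t * g + C) ≠ 0 := by positivity
    have := (hnum.div hden hdenne).sub ((hlog t ht).div_const (Real.log 2))
    refine this.congr_deriv ?_
    symm
    have hA' := (hA t ht).ne'
    field_simp
    ring
  -- φ is strictly decreasing on [0,∞)
  have hφanti : StrictAntiOn φ (Set.Ici 0) := by
    apply strictAntiOn_of_deriv_neg (convex_Ici 0)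
    · intro x hx
      exact (hφd x hx).continuousAt.continuousWithinAt
    · intro x hx
      rw [interior_Ici] at hx
      rw [(hφd x hx.le).deriv]
      apply div_neg_of_neg_of_pos
      · have := hB x hx.le; nlinarith [sq_nonneg g, pow_pos hg 2]
      · have := hA x hx.le; positivity
  have hφ0 : 0 < φ 0 := by
    have h := hφdη 0 le_rfl
    rw [h] at h0
    have hB0 : 0 < (Pf + 0 + D) ^ 2 := by have := hB 0 le_rfl; positivity
    by_contra hcon
    push_neg at hcon
    have : dη 0 ≤ 0 := by rw [h]; exact div_nonpos_of_nonpos_of_nonneg hcon hB0.le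
    rw [h] at this; linarith [h0]
  -- a point where φ is negative
  set K : ℝ := (g * (Pf + D) + σ2) / σ2 with hK
  set T : ℝ := σ2 * Real.exp (K + 1) / g with hT
  have hTpos : 0 < T := by positivity
  have hφT : φ T < 0 := by
    have hAT := hA T hTpos.le
    have h1 : g * (Pf + T + D) / (σ2 + T * g + C) ≤ K := by
      rw [div_le_iff₀ hAT, hK, div_mul_eq_mul_div, le_div_iff₀ hσ]
      nlinarith [mul_nonneg (mul_nonneg (mul_nonneg hg.le (by linarith : (0:ℝ) ≤ Pf + D)) hg.le) hTpos.le,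
        mul_nonneg (mul_nonneg hg.le (by linarith : (0:ℝ) ≤ Pf + D)) hC,
        mul_nonneg hσ.le hC, sq_nonneg σ2]
    have h2 : K + 1 ≤ Real.log (1 + (T * g + C) / σ2) := by
      have hTg : T * g / σ2 = Real.exp (K + 1) := by
        rw [hT]; field_simp
      have hge : Real.exp (K + 1) ≤ 1 + (T * g + C) / σ2 := by
        rw [← hTg]
        have h3 : 0 ≤ C / σ2 := div_nonneg hC hσ.le
        have hsplit : (T * g + C) / σ2 = T * g / σ2 + C / σ2 := by ring
        rw [hsplit]; linarith
      calc K + 1 = Real.log (Real.exp (K + 1)) := (Real.log_exp _).symm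
        _ ≤ _ := Real.log_le_log (Real.exp_pos _) hge
    have hKpos : 0 < K := by rw [hK]; positivity
    have e1 : φ T = (g * (Pf + T + D) / (σ2 + T * g + C)
        - Real.log (1 + (T * g + C) / σ2)) / Real.log 2 := by
      rw [hφdef]
      simp only [Real.logb]
      field_simp
    rw [e1]
    apply div_neg_of_neg_of_pos _ hL
    linarith
  -- existence of the root via IVT
  have hcontφ : ContinuousOn φ (Set.Icc 0 T) :=
    fun x hx => (hφd x hx.1).continuousAt.continuousWithinAt
  have hIVT := intermediate_value_Icc' hTpos.le hcontφ
  have h0mem : (0 : ℝ) ∈ Set.Icc (φ T) (φ 0) := ⟨hφT.le, hφ0.le⟩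
  obtain ⟨tstar, htmem, hroot⟩ := hIVT h0mem
  have htpos : 0 < tstar := by
    rcases lt_or_eq_of_le htmem.1 with h | h
    · exact h
    · exfalso; rw [← h] at hroot; linarith
  refine ⟨tstar, htpos, ?_, ?_, ?_, ?_, ?_⟩
  · rw [hφdη tstar htpos.le, hroot, zero_div]
  · intro t ht hdt
    have hφt : φ t = 0 := by
      have h := hφdη t ht.le
      rw [hdt] at h
      have hBt : (Pf + t + D) ^ 2 ≠ 0 := by have := hB t ht.le; positivity
      field_simp at h
      linarith
    exact hφanti.injOn ht.le htpos.le (by rw [hφt, hroot])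
  · apply strictMonoOn_of_deriv_pos (convex_Icc 0 tstar)
    · intro x hx
      exact (hηd x hx.1).continuousAt.continuousWithinAt
    · intro x hx
      rw [interior_Icc] at hx
      rw [(hηd x hx.1.le).deriv, hφdη x hx.1.le]
      apply div_pos
      · have := hφanti (Set.mem_Ici.mpr hx.1.le) (Set.mem_Ici.mpr htpos.le) hx.2
        rw [hroot] at this
        linarith
      · have := hB x hx.1.le; positivity
  · apply strictAntiOn_of_deriv_neg (convex_Ici tstar)
    · intro x hx
      exact (hηd x (le_trans htpos.le hx)).continuousAt.continuousWithinAt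
    · intro x hx
      rw [interior_Ici] at hx
      have hx0 : 0 ≤ x := le_trans htpos.le hx.le
      rw [(hηd x hx0).deriv, hφdη x hx0]
      apply div_neg_of_neg_of_pos
      · have := hφanti (Set.mem_Ici.mpr htpos.le) (Set.mem_Ici.mpr hx0) hx
        rw [hroot] at this
        linarith
      · have := hB x hx0; positivity
  · -- limit at infinity
    have hwtop : Filter.Tendsto (fun t : ℝ => 1 + (t * g + C) / σ2) Filter.atTop Filter.atTop := by
      exact Filter.tendsto_atTop_add_const_left _ 1
        ((Filter.tendsto_atTop_add_const_right _ C
          (Filter.tendsto_id.atTop_mul_const hg)).atTop_div_const hσ)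
    have key := Real.tendsto_pow_log_div_mul_add_atTop (σ2 / g) (Pf + D - (σ2 + C) / g) 1
      (by positivity)
    have hcomp := key.comp hwtop
    have hfe : η = fun t : ℝ =>
        (Real.log (1 + (t * g + C) / σ2) ^ 1 / (σ2 / g * (1 + (t * g + C) / σ2) + (Pf + D - (σ2 + C) / g))) / Real.log 2 := by
      rw [hη]; funext t
      have hab : σ2 / g * (1 + (t * g + C) / σ2) + (Pf + D - (σ2 + C) / g) = Pf + t + D := by
        field_simp
        ring
      rw [hab]
      simp only [Real.logb, pow_one]
      rw [div_div, div_div]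
      ring
    rw [hfe]
    have := hcomp.div_const (Real.log 2)
    simpa using this
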